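/- Let {T_n} be the tribonacci numbers. For every integer n ≥ 1, the Toeplitz–Hessenberg determinant det(1; T_5, T_6, …, T_{n+4}) equals Σ_{i=0}^{⌊(n+1)/2⌋} C(n+2+i, n+1−2i). -/

import Mathlib

/-- The determinant of the `n × n` Toeplitz–Hessenberg matrix whose `(i,j)` entry
(0-indexed) is `a (i - j + 1)` when `j ≤ i + 1` (so `a 0` lies on the superdiagonal
and `a k` on the `k`-th subdiagonal) and `0` otherwise. -/
def THdet (a : ℕ → ℤ) (n : ℕ) : ℤ :=
  (Matrix.of fun i j : Fin n => if (j : ℕ) ≤ (i : ℕ) + 1 then a ((i : ℕ) + 1 - (j : ℕ)) else 0).det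

/-- The tribonacci numbers: `T 0 = T 1 = 0`, `T 2 = 1`,
`T n = T (n-1) + T (n-2) + T (n-3)` for `n ≥ 3`. -/
def trib : ℕ → ℤ
  | 0 => 0
  | 1 => 0
  | 2 => 1
  | n + 3 => trib (n + 2) + trib (n + 1) + trib n

namespace S11

def aT : ℕ → ℤ := fun k => if k = 0 then 1 else trib (k + 4)

def Nmat (b : ℕ → ℤ) (n : ℕ) : Matrix (Fin n) (Fin n) ℤ :=
  Matrix.of fun i j => if (j : ℕ) = 0 then b i else
    if (j : ℕ) ≤ (i : ℕ) + 1 then aT ((i : ℕ) + 1 - (j : ℕ)) else 0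

def G (m n : ℕ) : ℤ := (Nmat (fun i => aT (i + m)) n).det

lemma succAbove_one_coe (m : ℕ) (k : Fin (m+1)) :
    (((1 : Fin (m+2)).succAbove k : Fin (m+2)) : ℕ) = if (k:ℕ) = 0 then 0 else (k:ℕ)+1 := by
  rcases eq_or_ne (k:ℕ) 0 with h | h
  · rw [Fin.succAbove_of_castSucc_lt]
    · simp [h]
    · simp [Fin.lt_def, h]
  · rw [Fin.succAbove_of_le_castSucc]
    · simp [h]
    · simp [Fin.le_def]; omega

lemma expand (b : ℕ → ℤ) (m : ℕ) :
    (Nmat b (m+2)).det =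
      b 0 * (Nmat (fun i => aT (i+1)) (m+1)).det - (Nmat (fun i => b (i+1)) (m+1)).det := by
  rw [show m + 2 = (m+1).succ from rfl, Matrix.det_succ_row_zero, Fin.sum_univ_succ,
    Fin.sum_univ_succ]
  have hz : ∀ j : Fin m, (Nmat b (m+2)) 0 ((j.succ).succ) = 0 := by
    intro j; simp [Nmat]
  have h00 : (Nmat b (m+2)) 0 0 = b 0 := by simp [Nmat]
  have h01 : (Nmat b (m+2)) 0 ((0 : Fin (m+1)).succ) = 1 := by simp [Nmat, aT]
  have hm0 : (Nmat b (m+2)).submatrix Fin.succ ((0 : Fin (m+2)).succAbove)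
      = Nmat (fun i => aT (i+1)) (m+1) := by
    ext i k
    simp only [Matrix.submatrix_apply, Fin.zero_succAbove, Nmat, Matrix.of_apply,
      Fin.val_succ]
    rcases eq_or_ne (k:ℕ) 0 with h | h
    · simp [h]
    · rw [if_neg (by omega), if_neg h]
      by_cases h2 : (k:ℕ) ≤ (i:ℕ) + 1
      · rw [if_pos (by omega), if_pos h2]
        congr 1; omega
      · rw [if_neg (by omega), if_neg h2]
  have hm1 : (Nmat b (m+2)).submatrix Fin.succ (((0:Fin (m+1)).succ : Fin (m+2)).succAbove)
      = Nmat (fun i => b (i+1)) (m+1) := by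
    ext i k
    have hcoe := succAbove_one_coe m k
    simp only [Matrix.submatrix_apply, Nmat, Matrix.of_apply, Fin.val_succ]
    rw [show ((0:Fin (m+1)).succ : Fin (m+2)) = 1 from rfl] at *
    rcases eq_or_ne (k:ℕ) 0 with h | h
    · rw [if_pos h] at hcoe; rw [hcoe]; simp [h]
    · rw [if_neg h] at hcoe; rw [hcoe, if_neg (by omega), if_neg h]
      by_cases h2 : (k:ℕ) ≤ (i:ℕ) + 1
      · rw [if_pos (by omega), if_pos h2]; congr 1; omega
      · rw [if_neg (by omega), if_neg h2]
  rw [hm0, hm1, h00, h01]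
  simp only [hz]
  simp
  ring

lemma Ncongr (b c : ℕ → ℤ) (n : ℕ) (h : ∀ i, b i = c i) :
    (Nmat b n).det = (Nmat c n).det := by
  congr 1; ext i j; simp only [Nmat, Matrix.of_apply, h]

lemma Nupdate (b c : ℕ → ℤ) (k : ℕ) :
    (Nmat c (k+1)).updateCol 0 (fun i => b i) = Nmat b (k+1) := by
  ext i j
  rw [Matrix.updateCol_apply]
  rcases eq_or_ne j 0 with h | h
  · simp [h, Nmat]
  · rw [if_neg h]
    have : (j : ℕ) ≠ 0 := fun hh => h (Fin.ext hh)
    simp [Nmat, this, h]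

lemma Nlin (u v w : ℕ → ℤ) (k : ℕ) :
    (Nmat (fun i => u i + v i + w i) (k+1)).det
      = (Nmat u (k+1)).det + (Nmat v (k+1)).det + (Nmat w (k+1)).det := by
  have h1 : (Nmat (fun i => u i + v i + w i) (k+1))
      = (Nmat u (k+1)).updateCol 0 ((fun i : Fin (k+1) => u i) + ((fun i : Fin (k+1) => v i) + (fun i : Fin (k+1) => w i))) := by
    rw [show ((fun i : Fin (k+1) => u i) + ((fun i : Fin (k+1) => v i) + (fun i : Fin (k+1) => w i))) = fun i : Fin (k+1) => (fun t => u t + v t + w t) i from by funext i; simp; ring]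
    exact (Nupdate (fun t => u t + v t + w t) u k).symm
  rw [h1, Matrix.det_updateCol_add, Matrix.det_updateCol_add,
    Nupdate, Nupdate, Nupdate]
  ring

lemma aT_rec (t : ℕ) (ht : 1 ≤ t) : aT (t+3) = aT (t+2) + aT (t+1) + aT t := by
  simp only [aT, if_neg (by omega : ¬t+3 = 0), if_neg (by omega : ¬t+2 = 0),
    if_neg (by omega : ¬t+1 = 0), if_neg (by omega : ¬t = 0)]
  show trib ((t+4)+3) = _
  rw [trib]

lemma a1 : aT 1 = 4 := by norm_num [aT]; rfl
lemma a2 : aT 2 = 7 := by norm_num [aT]; rfl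
lemma a3 : aT 3 = 13 := by norm_num [aT]; rfl

lemma Gexp (mm t : ℕ) : G mm (t+2) = aT mm * G 1 (t+1) - G (mm+1) (t+1) := by
  have h := expand (fun i => aT (i + mm)) t
  have h2 : (Nmat (fun i => (fun i => aT (i + mm)) (i+1)) (t+1)).det
      = (Nmat (fun i => aT (i + (mm+1))) (t+1)).det := by
    apply Ncongr; intro i; show aT (i+1+mm) = aT (i+(mm+1)); congr 1; omega
  unfold G
  rw [h, h2]
  norm_num

lemma Glin (k : ℕ) : G 4 (k+1) = G 3 (k+1) + G 2 (k+1) + G 1 (k+1) := by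
  unfold G
  rw [← Nlin]
  apply Ncongr
  intro i
  exact aT_rec (i+1) (by omega)

lemma Drec (j : ℕ) : G 1 (j+4) = 3 * G 1 (j+3) - 2 * G 1 (j+2) + G 1 (j+1) := by
  have E1 : G 1 (j+4) = aT 1 * G 1 (j+3) - G 2 (j+3) := Gexp 1 (j+2)
  have E2 : G 2 (j+3) = aT 2 * G 1 (j+2) - G 3 (j+2) := Gexp 2 (j+1)
  have E3 : G 3 (j+2) = aT 3 * G 1 (j+1) - G 4 (j+1) := Gexp 3 j
  have E4 : G 4 (j+1) = G 3 (j+1) + G 2 (j+1) + G 1 (j+1) := Glin j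
  have E5 : G 2 (j+2) = aT 2 * G 1 (j+1) - G 3 (j+1) := Gexp 2 j
  have E6 : G 1 (j+3) = aT 1 * G 1 (j+2) - G 2 (j+2) := Gexp 1 (j+1)
  have E7 : G 1 (j+2) = aT 1 * G 1 (j+1) - G 2 (j+1) := Gexp 1 j
  rw [a1] at *; rw [a2] at *; rw [a3] at *
  linarith

def B (j n : ℕ) : ℤ := ∑ k ∈ Finset.range (n+2), ((n+2+k).choose (3*k+j) : ℤ)

lemma B_succ (j n : ℕ) (hj : j ≤ 2) :
    B j (n+1) = ∑ k ∈ Finset.range (n+2), ((n+3+k).choose (3*k+j) : ℤ) := by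
  show (∑ k ∈ Finset.range ((n+2)+1), ((n+3+k).choose (3*k+j) : ℤ)) = _
  rw [Finset.sum_range_succ]
  have : (((n+3+(n+2)).choose (3*(n+2)+j) : ℕ) : ℤ) = 0 := by
    norm_cast; apply Nat.choose_eq_zero_of_lt; omega
  rw [this, add_zero]

lemma r1 (n : ℕ) : B 1 (n+1) = B 1 n + B 0 n := by
  rw [B_succ 1 n (by omega)]
  unfold B
  rw [← Finset.sum_add_distrib]
  apply Finset.sum_congr rfl
  intro k _
  rw [show n+3+k = (n+2+k) + 1 by omega, show 3*k+1 = (3*k)+1 from rfl,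
    Nat.choose_succ_succ']
  push_cast
  ring

lemma r2 (n : ℕ) : B 2 (n+1) = B 2 n + B 1 n := by
  rw [B_succ 2 n (by omega)]
  unfold B
  rw [← Finset.sum_add_distrib]
  apply Finset.sum_congr rfl
  intro k _
  rw [show n+3+k = (n+2+k) + 1 by omega, show 3*k+2 = (3*k+1)+1 from rfl,
    Nat.choose_succ_succ']
  push_cast
  ring

lemma r0 (n : ℕ) : B 0 (n+1) = B 0 n + B 2 (n+1) := by
  have lhs : B 0 (n+1) = (∑ k ∈ Finset.range (n+2), ((n+4+k).choose (3*k+3) : ℤ)) + 1 := by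
    show (∑ k ∈ Finset.range ((n+2)+1), ((n+3+k).choose (3*k+0) : ℤ)) = _
    rw [Finset.sum_range_succ' (fun k => ((n+3+k).choose (3*k+0) : ℤ)) (n+2)]
    congr 1
    apply Finset.sum_congr rfl
    intro k _
    congr 2 <;> omega
  have pascal : ∀ k, ((n+4+k).choose (3*k+3) : ℤ)
      = ((n+3+k).choose (3*k+2) : ℤ) + ((n+3+k).choose (3*k+3) : ℤ) := by
    intro k
    rw [show n+4+k = (n+3+k)+1 by omega, show 3*k+3 = (3*k+2)+1 from rfl,
      Nat.choose_succ_succ']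
    push_cast; ring
  have rhs2 : B 2 (n+1) = ∑ k ∈ Finset.range (n+2), ((n+3+k).choose (3*k+2) : ℤ) :=
    B_succ 2 n (by omega)
  have rhs0 : B 0 n = (∑ k ∈ Finset.range (n+2), ((n+3+k).choose (3*k+3) : ℤ)) + 1 := by
    show (∑ k ∈ Finset.range ((n+1)+1), ((n+2+k).choose (3*k+0) : ℤ)) = _
    rw [Finset.sum_range_succ' (fun k => ((n+2+k).choose (3*k+0) : ℤ)) (n+1)]
    have ext1 : (∑ k ∈ Finset.range (n+2), ((n+3+k).choose (3*k+3) : ℤ))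
        = ∑ k ∈ Finset.range (n+1), ((n+3+k).choose (3*k+3) : ℤ) := by
      show (∑ k ∈ Finset.range ((n+1)+1), ((n+3+k).choose (3*k+3) : ℤ)) = _
      rw [Finset.sum_range_succ]
      have : (((n+3+(n+1)).choose (3*(n+1)+3) : ℕ) : ℤ) = 0 := by
        norm_cast; apply Nat.choose_eq_zero_of_lt; omega
      rw [this, add_zero]
    rw [ext1]
    congr 1
    apply Finset.sum_congr rfl
    intro k _
    congr 2 <;> omega
  rw [lhs, rhs2, rhs0, Finset.sum_congr rfl (fun k _ => pascal k), Finset.sum_add_distrib]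
  ring

lemma Brec (n : ℕ) : B 1 (n+3) = 3 * B 1 (n+2) - 2 * B 1 (n+1) + B 1 n := by
  have h1 := r1 (n+2)
  have h2 := r1 (n+1)
  have h3 := r1 n
  have h4 := r0 (n+1)
  have h5 := r0 n
  have h6 := r2 (n+1)
  linarith

lemma bridge (n : ℕ) :
    (∑ i ∈ Finset.range ((n + 1) / 2 + 1), ((n + 2 + i).choose (n + 1 - 2 * i) : ℤ)) = B 1 n := by
  have step1 : (∑ i ∈ Finset.range ((n + 1) / 2 + 1), ((n + 2 + i).choose (n + 1 - 2 * i) : ℤ))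
      = ∑ i ∈ Finset.range ((n + 1) / 2 + 1), ((n + 2 + i).choose (3*i+1) : ℤ) := by
    apply Finset.sum_congr rfl
    intro i hi
    rw [Finset.mem_range] at hi
    have h2 : 2 * i ≤ n + 1 := by omega
    rw [show n + 1 - 2*i = (n+2+i) - (3*i+1) by omega, Nat.choose_symm (by omega)]
  rw [step1]
  unfold B
  apply Finset.sum_subset
  · intro x hx
    rw [Finset.mem_range] at *
    omega
  · intro x _ hx
    rw [Finset.mem_range] at hx
    norm_cast
    apply Nat.choose_eq_zero_of_lt
    omega

lemma Gbase1 : G 1 1 = 4 := by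
  simp [G, Matrix.det_fin_one, Nmat]
  norm_num [aT, trib]

lemma Gbase2 : G 1 2 = 9 := by
  simp [G, Matrix.det_fin_two, Nmat]
  norm_num [aT, trib]

lemma Gbase3 : G 1 3 = 21 := by
  simp [G, Matrix.det_fin_three, Nmat]
  norm_num [aT, trib]

lemma Bbase1 : B 1 1 = 4 := by
  norm_num [B, Finset.sum_range_succ, Nat.choose]

lemma Bbase2 : B 1 2 = 9 := by
  norm_num [B, Finset.sum_range_succ, Nat.choose]

lemma Bbase3 : B 1 3 = 21 := by
  norm_num [B, Finset.sum_range_succ, Nat.choose]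

lemma key (j : ℕ) : G 1 (j+1) = B 1 (j+1) ∧ G 1 (j+2) = B 1 (j+2) ∧ G 1 (j+3) = B 1 (j+3) := by
  induction j with
  | zero => exact ⟨by rw [Gbase1, Bbase1], by rw [Gbase2, Bbase2], by rw [Gbase3, Bbase3]⟩
  | succ k ih =>
    refine ⟨ih.2.1, ih.2.2, ?_⟩
    have hG : G 1 (k+4) = 3 * G 1 (k+3) - 2 * G 1 (k+2) + G 1 (k+1) := Drec k
    have hB : B 1 (k+4) = 3 * B 1 (k+3) - 2 * B 1 (k+2) + B 1 (k+1) := Brec (k+1)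
    show G 1 (k+4) = B 1 (k+4)
    rw [hG, hB, ih.1, ih.2.1, ih.2.2]

lemma THdet_eq_G (n : ℕ) :
    THdet (fun k => if k = 0 then 1 else trib (k + 4)) n = G 1 n := by
  unfold THdet G
  congr 1
  ext i j
  simp only [Matrix.of_apply, Nmat]
  rcases eq_or_ne (j:ℕ) 0 with h | h
  · rw [if_pos h, if_pos (by omega), h]
    show aT (i+1-0) = aT (i+1)
    congr 1
  · rw [if_neg h]
    rfl

end S11

theorem stmt_11 (n : ℕ) (hn : 1 ≤ n) :
    THdet (fun k => if k = 0 then 1 else trib (k + 4)) n =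
      ∑ i ∈ Finset.range ((n + 1) / 2 + 1), ((n + 2 + i).choose (n + 1 - 2 * i) : ℤ) := by
  obtain ⟨j, rfl⟩ : ∃ j, n = j + 1 := ⟨n - 1, by omega⟩
  rw [S11.THdet_eq_G, S11.bridge]
  exact (S11.key j).1
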